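/- Let V = ℝ^d, let Ω ⊆ P(V) be a connected open set, and let Ω* = {[f] ∈ P(V*) : f(x) ≠ 0 ∀ [x] ∈ Ω}, assumed compact with nonempty interior. Define C_Ω(x,y) = sup over [f],[g] ∈ Ω* of (1/2)|log|f(x)g(y)/(f(y)g(x))||, a metric generating the standard topology on Ω. If (Ω, C_Ω) is a complete metric space, then Ω is dual convex: for every x ∈ ∂Ω there exists [ξ] ∈ Ω* with ξ(x) = 0. -/

import Mathlib

set_option maxHeartbeats 1000000

open scoped LinearAlgebra.Projectivization
open Projectivization

/-- The quotient topology on a projectivization. -/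
instance projTopology {K V : Type*} [DivisionRing K] [AddCommGroup V] [Module K V]
    [TopologicalSpace V] : TopologicalSpace (ℙ K V) :=
  inferInstanceAs (TopologicalSpace (Quotient (projectivizationSetoid K V)))

/-- `C_Ω(x,y) = sup_{[f],[g] ∈ Ω*} (1/2)|log|f(x)g(y)/(f(y)g(x))||`. -/
noncomputable def crossDist {V : Type*} [NormedAddCommGroup V] [NormedSpace ℝ V]
    (Ωd : Set (ℙ ℝ (StrongDual ℝ V))) (x y : ℙ ℝ V) : ℝ :=
  sSup {r : ℝ | ∃ f ∈ Ωd, ∃ g ∈ Ωd,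
    r = (1/2) * |Real.log (abs ((f.rep x.rep * g.rep y.rep) / (f.rep y.rep * g.rep x.rep)))|}

namespace Stmt11Aux

variable {d : ℕ}

local notation "Vd" => Fin d → ℝ
local notation "Dd" => StrongDual ℝ (Fin d → ℝ)

/-- The defining set of `crossDist`, with arbitrary vector arguments. -/
def ES (Ωd : Set (ℙ ℝ Dd)) (w w' : Vd) : Set ℝ :=
  {r : ℝ | ∃ f ∈ Ωd, ∃ g ∈ Ωd,
    r = (1/2) * |Real.log (abs ((f.rep w * g.rep w') / (f.rep w' * g.rep w)))|}

lemma crossDist_eq (Ωd : Set (ℙ ℝ Dd)) (x y : ℙ ℝ Vd) :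
    crossDist Ωd x y = sSup (ES Ωd x.rep y.rep) := rfl

lemma ratio_smul_left (f g : Dd) (c : ℝ) (hc : c ≠ 0) (w w' : Vd) :
    (f (c • w) * g w') / (f w' * g (c • w)) = (f w * g w') / (f w' * g w) := by
  rw [map_smul, map_smul, smul_eq_mul, smul_eq_mul,
    show c * f w * g w' = c * (f w * g w') by ring,
    show f w' * (c * g w) = c * (f w' * g w) by ring]
  exact mul_div_mul_left _ _ hc

lemma ratio_smul_right (f g : Dd) (c : ℝ) (hc : c ≠ 0) (w w' : Vd) :
    (f w * g (c • w')) / (f (c • w') * g w) = (f w * g w') / (f w' * g w) := by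
  rw [map_smul, map_smul, smul_eq_mul, smul_eq_mul,
    show f w * (c * g w') = c * (f w * g w') by ring,
    show c * f w' * g w = c * (f w' * g w) by ring]
  exact mul_div_mul_left _ _ hc

lemma ES_smul_left (Ωd : Set (ℙ ℝ Dd)) (c : ℝ) (hc : c ≠ 0) (w w' : Vd) :
    ES Ωd (c • w) w' = ES Ωd w w' := by
  unfold ES
  ext r
  constructor
  · rintro ⟨f, hf, g, hg, rfl⟩
    exact ⟨f, hf, g, hg, by rw [ratio_smul_left _ _ c hc]⟩
  · rintro ⟨f, hf, g, hg, rfl⟩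
    exact ⟨f, hf, g, hg, by rw [ratio_smul_left _ _ c hc]⟩

lemma ES_smul_right (Ωd : Set (ℙ ℝ Dd)) (c : ℝ) (hc : c ≠ 0) (w w' : Vd) :
    ES Ωd w (c • w') = ES Ωd w w' := by
  unfold ES
  ext r
  constructor
  · rintro ⟨f, hf, g, hg, rfl⟩
    exact ⟨f, hf, g, hg, by rw [ratio_smul_right _ _ c hc]⟩
  · rintro ⟨f, hf, g, hg, rfl⟩
    exact ⟨f, hf, g, hg, by rw [ratio_smul_right _ _ c hc]⟩

lemma ES_symm (Ωd : Set (ℙ ℝ Dd)) (w w' : Vd) : ES Ωd w w' = ES Ωd w' w := by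
  unfold ES
  ext r
  constructor
  · rintro ⟨f, hf, g, hg, rfl⟩
    exact ⟨g, hg, f, hf, by rw [mul_comm (g.rep w') (f.rep w), mul_comm (g.rep w) (f.rep w')]⟩
  · rintro ⟨f, hf, g, hg, rfl⟩
    exact ⟨g, hg, f, hf, by rw [mul_comm (g.rep w) (f.rep w'), mul_comm (g.rep w') (f.rep w)]⟩

lemma crossDist_mk (Ωd : Set (ℙ ℝ Dd)) (w w' : Vd) (hw : w ≠ 0) (hw' : w' ≠ 0) :
    crossDist Ωd (Projectivization.mk ℝ w hw) (Projectivization.mk ℝ w' hw')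
      = sSup (ES Ωd w w') := by
  obtain ⟨a, ha⟩ := exists_smul_eq_mk_rep ℝ w hw
  obtain ⟨b, hb⟩ := exists_smul_eq_mk_rep ℝ w' hw'
  rw [crossDist_eq, ← ha, ← hb, Units.smul_def, Units.smul_def,
    ES_smul_left _ _ a.ne_zero, ES_smul_right _ _ b.ne_zero]

lemma zero_mem_ES (Ωd : Set (ℙ ℝ Dd)) (hne : Ωd.Nonempty) (w w' : Vd) :
    (0 : ℝ) ∈ ES Ωd w w' := by
  obtain ⟨f, hf⟩ := hne
  refine ⟨f, hf, f, hf, ?_⟩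
  by_cases h : f.rep w' * f.rep w = 0
  · rw [h, div_zero, abs_zero, Real.log_zero, abs_zero, mul_zero]
  · rw [mul_comm (f.rep w) (f.rep w'), div_self h, abs_one, Real.log_one, abs_zero, mul_zero]

lemma div_le_div_left' {a b c : ℝ} (ha : 0 ≤ a) (hb : 0 < b) (hbc : b ≤ c) :
    a / c ≤ a / b := by
  rw [div_le_div_iff₀ (lt_of_lt_of_le hb hbc) hb]
  nlinarith

lemma log_sub_log_le {a b c M : ℝ} (hc : 0 < c) (ha : c ≤ a) (hb : c ≤ b)
    (hM : |a - b| ≤ M) : |Real.log a - Real.log b| ≤ M / c := by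
  have key : ∀ x y : ℝ, c ≤ x → c ≤ y → x ≤ y →
      Real.log y - Real.log x ≤ (y - x) / c := by
    intro x y hx hy hxy
    have hx0 : 0 < x := lt_of_lt_of_le hc hx
    have hy0 : 0 < y := lt_of_lt_of_le hc hy
    have h1 : Real.log y - Real.log x = Real.log (y / x) :=
      (Real.log_div hy0.ne' hx0.ne').symm
    have h2 : Real.log (y / x) ≤ y / x - 1 := Real.log_le_sub_one_of_pos (by positivity)
    have h3 : y / x - 1 = (y - x) / x := by field_simp
    have h4 : (y - x) / x ≤ (y - x) / c := by gcongr
    linarith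
  rcases le_total a b with h | h
  · have h1 := key a b ha hb h
    have hlog : Real.log a ≤ Real.log b := Real.log_le_log (lt_of_lt_of_le hc ha) h
    have h2 : |Real.log a - Real.log b| = Real.log b - Real.log a := by
      rw [abs_sub_comm]; exact abs_of_nonneg (by linarith)
    have h3 : b - a ≤ M := by
      rw [abs_sub_comm] at hM; exact le_trans (le_abs_self _) hM
    have h4 : (b - a) / c ≤ M / c := by gcongr
    linarith
  · have h1 := key b a hb ha h
    have hlog : Real.log b ≤ Real.log a := Real.log_le_log (lt_of_lt_of_le hc hb) h
    have h2 : |Real.log a - Real.log b| = Real.log a - Real.log b :=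
      abs_of_nonneg (by linarith)
    have h3 : a - b ≤ M := le_trans (le_abs_self _) hM
    have h4 : (a - b) / c ≤ M / c := by gcongr
    linarith

lemma ES_bound (Ωd : Set (ℙ ℝ Dd)) (w w' : Vd) (δ : ℝ) (hδ : 0 < δ)
    (h1 : ∀ φ ∈ Ωd, δ * ‖Projectivization.rep φ‖ ≤ |Projectivization.rep φ w|)
    (h2 : ∀ φ ∈ Ωd, δ * ‖Projectivization.rep φ‖ ≤ |Projectivization.rep φ w'|) :
    ∀ r ∈ ES Ωd w w', r ≤ ‖w - w'‖ / δ := by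
  rintro r ⟨f, hf, g, hg, rfl⟩
  have hfn : (0:ℝ) < ‖f.rep‖ := norm_pos_iff.mpr f.rep_nonzero
  have hgn : (0:ℝ) < ‖g.rep‖ := norm_pos_iff.mpr g.rep_nonzero
  have hfw := h1 f hf
  have hfw' := h2 f hf
  have hgw := h1 g hg
  have hgw' := h2 g hg
  have hcf : (0:ℝ) < δ * ‖f.rep‖ := by positivity
  have hcg : (0:ℝ) < δ * ‖g.rep‖ := by positivity
  -- |f w| etc. are positive
  have hAf : (0:ℝ) < |f.rep w| := lt_of_lt_of_le hcf hfw
  have hAf' : (0:ℝ) < |f.rep w'| := lt_of_lt_of_le hcf hfw'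
  have hAg : (0:ℝ) < |g.rep w| := lt_of_lt_of_le hcg hgw
  have hAg' : (0:ℝ) < |g.rep w'| := lt_of_lt_of_le hcg hgw'
  -- difference bounds
  have hdiff : ∀ φ : ℙ ℝ Dd, |abs (Projectivization.rep φ w) - abs (Projectivization.rep φ w')|
      ≤ ‖Projectivization.rep φ‖ * ‖w - w'‖ := by
    intro φ
    have h5 : |Projectivization.rep φ w - Projectivization.rep φ w'|
        ≤ ‖Projectivization.rep φ‖ * ‖w - w'‖ := by
      rw [← map_sub]
      simpa [Real.norm_eq_abs] using (Projectivization.rep φ).le_opNorm (w - w')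
    exact le_trans (abs_abs_sub_abs_le_abs_sub _ _) h5
  have hlf : |Real.log (abs (f.rep w)) - Real.log (abs (f.rep w'))| ≤ ‖w - w'‖ / δ := by
    have := log_sub_log_le hcf hfw hfw' (hdiff f)
    calc |Real.log (abs (f.rep w)) - Real.log (abs (f.rep w'))|
        ≤ (‖f.rep‖ * ‖w - w'‖) / (δ * ‖f.rep‖) := this
      _ = ‖w - w'‖ / δ := by
          rw [mul_comm δ ‖f.rep‖]; exact mul_div_mul_left _ _ hfn.ne'
  have hlg : |Real.log (abs (g.rep w')) - Real.log (abs (g.rep w))| ≤ ‖w - w'‖ / δ := by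
    have hd := hdiff g
    rw [abs_sub_comm] at hd
    have := log_sub_log_le hcg hgw' hgw hd
    calc |Real.log (abs (g.rep w')) - Real.log (abs (g.rep w))|
        ≤ (‖g.rep‖ * ‖w - w'‖) / (δ * ‖g.rep‖) := this
      _ = ‖w - w'‖ / δ := by
          rw [mul_comm δ ‖g.rep‖]; exact mul_div_mul_left _ _ hgn.ne'
  -- compute log of ratio
  have habs : abs ((f.rep w * g.rep w') / (f.rep w' * g.rep w))
      = (abs (f.rep w) * abs (g.rep w')) / (abs (f.rep w') * abs (g.rep w)) := by
    rw [abs_div, abs_mul, abs_mul]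
  have hlog : Real.log ((abs (f.rep w) * abs (g.rep w')) / (abs (f.rep w') * abs (g.rep w)))
      = (Real.log (abs (f.rep w)) - Real.log (abs (f.rep w')))
        + (Real.log (abs (g.rep w')) - Real.log (abs (g.rep w))) := by
    rw [Real.log_div (by positivity) (by positivity),
      Real.log_mul hAf.ne' hAg'.ne', Real.log_mul hAf'.ne' hAg.ne']
    ring
  rw [habs, hlog]
  have := abs_add_le (Real.log (abs (f.rep w)) - Real.log (abs (f.rep w')))
    (Real.log (abs (g.rep w')) - Real.log (abs (g.rep w)))
  linarith

lemma bddAbove_ES (Ωd : Set (ℙ ℝ Dd)) (w w' : Vd) (δ : ℝ) (hδ : 0 < δ)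
    (h1 : ∀ φ ∈ Ωd, δ * ‖Projectivization.rep φ‖ ≤ |Projectivization.rep φ w|)
    (h2 : ∀ φ ∈ Ωd, δ * ‖Projectivization.rep φ‖ ≤ |Projectivization.rep φ w'|) :
    BddAbove (ES Ωd w w') :=
  ⟨‖w - w'‖ / δ, fun _ hr => ES_bound Ωd w w' δ hδ h1 h2 _ hr⟩

lemma ES_triangle (Ωd : Set (ℙ ℝ Dd)) (hne : Ωd.Nonempty) (w z w' : Vd)
    (hz : ∀ φ ∈ Ωd, Projectivization.rep φ z ≠ 0)
    (B1 : BddAbove (ES Ωd w z)) (B2 : BddAbove (ES Ωd z w')) :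
    sSup (ES Ωd w w') ≤ sSup (ES Ωd w z) + sSup (ES Ωd z w') := by
  have n1 : (0:ℝ) ≤ sSup (ES Ωd w z) := le_csSup B1 (zero_mem_ES Ωd hne w z)
  have n2 : (0:ℝ) ≤ sSup (ES Ωd z w') := le_csSup B2 (zero_mem_ES Ωd hne z w')
  apply Real.sSup_le _ (by linarith)
  rintro r ⟨f, hf, g, hg, rfl⟩
  by_cases h0 : f.rep w * g.rep w' = 0 ∨ f.rep w' * g.rep w = 0
  · have hr0 : (f.rep w * g.rep w') / (f.rep w' * g.rep w) = 0 := by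
      rcases h0 with h | h
      · rw [h, zero_div]
      · rw [h, div_zero]
    rw [hr0, abs_zero, Real.log_zero, abs_zero, mul_zero]
    linarith
  · push_neg at h0
    have hfw : f.rep w ≠ 0 := left_ne_zero_of_mul h0.1
    have hgw' : g.rep w' ≠ 0 := right_ne_zero_of_mul h0.1
    have hfw' : f.rep w' ≠ 0 := left_ne_zero_of_mul h0.2
    have hgw : g.rep w ≠ 0 := right_ne_zero_of_mul h0.2
    have hfz := hz f hf
    have hgz := hz g hg
    have key : (f.rep w * g.rep w') / (f.rep w' * g.rep w)
        = ((f.rep w * g.rep z) / (f.rep z * g.rep w))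
          * ((f.rep z * g.rep w') / (f.rep w' * g.rep z)) := by
      field_simp
    set R1 := (f.rep w * g.rep z) / (f.rep z * g.rep w) with hR1def
    set R2 := (f.rep z * g.rep w') / (f.rep w' * g.rep z) with hR2def
    have hR1 : R1 ≠ 0 := div_ne_zero (mul_ne_zero hfw hgz) (mul_ne_zero hfz hgw)
    have hR2 : R2 ≠ 0 := div_ne_zero (mul_ne_zero hfz hgw') (mul_ne_zero hfw' hgz)
    have hlogsplit : Real.log (abs (R1 * R2)) = Real.log (abs R1) + Real.log (abs R2) := by
      rw [abs_mul, Real.log_mul (abs_ne_zero.mpr hR1) (abs_ne_zero.mpr hR2)]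
    have e1 : (1/2 : ℝ) * |Real.log (abs R1)| ∈ ES Ωd w z := ⟨f, hf, g, hg, rfl⟩
    have e2 : (1/2 : ℝ) * |Real.log (abs R2)| ∈ ES Ωd z w' := ⟨f, hf, g, hg, rfl⟩
    have le1 : (1/2 : ℝ) * |Real.log (abs R1)| ≤ sSup (ES Ωd w z) := le_csSup B1 e1
    have le2 : (1/2 : ℝ) * |Real.log (abs R2)| ≤ sSup (ES Ωd z w') := le_csSup B2 e2
    have htri := abs_add_le (Real.log (abs R1)) (Real.log (abs R2))
    rw [key, hlogsplit]
    linarith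

lemma rep_ne_of_mem (Ω : Set (ℙ ℝ Vd)) (Ωd : Set (ℙ ℝ Dd))
    (hΩd : Ωd = {φ : ℙ ℝ Dd | ∀ x ∈ Ω, Projectivization.rep φ (Projectivization.rep x) ≠ 0})
    (φ : ℙ ℝ Dd) (hφ : φ ∈ Ωd) (w : Vd) (hw : w ≠ 0)
    (hmem : Projectivization.mk ℝ w hw ∈ Ω) : Projectivization.rep φ w ≠ 0 := by
  rw [hΩd] at hφ
  have h2 := hφ (Projectivization.mk ℝ w hw) hmem
  obtain ⟨a, ha⟩ := exists_smul_eq_mk_rep ℝ w hw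
  rw [← ha, Units.smul_def, map_smul, smul_eq_mul] at h2
  intro h3
  rw [h3, mul_zero] at h2
  exact h2 rfl

lemma exists_delta (Ωd : Set (ℙ ℝ Dd)) (hcpt : IsCompact Ωd) (hne : Ωd.Nonempty)
    (w : Vd) (hnz : ∀ φ ∈ Ωd, Projectivization.rep φ w ≠ 0) :
    ∃ δ : ℝ, 0 < δ ∧ ∀ φ ∈ Ωd, δ * ‖Projectivization.rep φ‖ ≤ |Projectivization.rep φ w| := by
  set G : ℙ ℝ Dd → ℝ := fun φ => |Projectivization.rep φ w| / ‖Projectivization.rep φ‖ with hG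
  have hGmk : ∀ (ξ : Dd) (hξ : ξ ≠ 0), G (Projectivization.mk ℝ ξ hξ) = |ξ w| / ‖ξ‖ := by
    intro ξ hξ
    obtain ⟨a, ha⟩ := exists_smul_eq_mk_rep ℝ ξ hξ
    rw [hG]
    dsimp only
    rw [← ha, Units.smul_def, ContinuousLinearMap.smul_apply, smul_eq_mul, norm_smul,
      abs_mul, Real.norm_eq_abs]
    exact mul_div_mul_left _ _ (abs_ne_zero.mpr a.ne_zero)
  have hGc : Continuous G := by
    refine (isQuotientMap_quot_mk (r := (projectivizationSetoid ℝ Dd).r)).continuous_iff.mpr ?_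
    have heq : (G ∘ Quot.mk (projectivizationSetoid ℝ Dd).r)
        = fun ξ : {ξ : Dd // ξ ≠ 0} => |ξ.1 w| / ‖ξ.1‖ := by
      funext ξ
      exact hGmk ξ.1 ξ.2
    refine (congrArg Continuous heq).mpr ?_
    have hev : Continuous fun ξ : {ξ : Dd // ξ ≠ 0} => ξ.1 w :=
      ((ContinuousLinearMap.apply ℝ ℝ w).continuous.comp continuous_subtype_val)
    exact (hev.abs.div (continuous_norm.comp continuous_subtype_val)
      fun ξ => norm_ne_zero_iff.mpr ξ.2)
  obtain ⟨φm, hφm, hmin⟩ := hcpt.exists_isMinOn hne hGc.continuousOn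
  refine ⟨G φm, ?_, ?_⟩
  · rw [hG]
    exact div_pos (abs_pos.mpr (hnz φm hφm)) (norm_pos_iff.mpr φm.rep_nonzero)
  · intro φ hφ
    have hle : G φm ≤ G φ := hmin hφ
    have hp : (0:ℝ) < ‖Projectivization.rep φ‖ := norm_pos_iff.mpr φ.rep_nonzero
    have : G φ * ‖Projectivization.rep φ‖ = |Projectivization.rep φ w| := by
      rw [hG]; field_simp
    nlinarith
 
lemma exists_functional₂ (A B : Vd) (hA : A ≠ 0) (hB : B ≠ 0) :
    ∃ g : Dd, g A ≠ 0 ∧ g B ≠ 0 := by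
  have h1 : ∃ i, A i ≠ 0 := by
    by_contra h
    push_neg at h
    exact hA (funext fun i => h i)
  have h2 : ∃ i, B i ≠ 0 := by
    by_contra h
    push_neg at h
    exact hB (funext fun i => h i)
  obtain ⟨i, hi⟩ := h1
  obtain ⟨j, hj⟩ := h2
  set g1 : Dd := ContinuousLinearMap.proj i with hg1def
  set g2 : Dd := ContinuousLinearMap.proj j with hg2def
  have hg1A : g1 A ≠ 0 := hi
  have hg2B : g2 B ≠ 0 := hj
  by_cases hc1 : g1 B ≠ 0
  · exact ⟨g1, hg1A, hc1⟩
  · push_neg at hc1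
    by_cases hc2 : g2 A ≠ 0
    · exact ⟨g2, hc2, hg2B⟩
    · push_neg at hc2
      refine ⟨g1 + g2, ?_, ?_⟩
      · rw [ContinuousLinearMap.add_apply, hc2, add_zero]
        exact hg1A
      · rw [ContinuousLinearMap.add_apply, hc1, zero_add]
        exact hg2B

lemma eq_of_abs_eq (Ωd : Set (ℙ ℝ Dd)) (hint : (interior Ωd).Nonempty)
    (v u : Vd) (hv : v ≠ 0) (hu : u ≠ 0)
    (hv0 : ∀ φ ∈ Ωd, Projectivization.rep φ v ≠ 0)
    (hu0 : ∀ φ ∈ Ωd, Projectivization.rep φ u ≠ 0)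
    (hall : ∀ f ∈ Ωd, ∀ g ∈ Ωd,
      |Projectivization.rep f v * Projectivization.rep g u|
        = |Projectivization.rep f u * Projectivization.rep g v|) :
    Projectivization.mk ℝ v hv = Projectivization.mk ℝ u hu := by
  obtain ⟨φ₀, hφ₀i⟩ := hint
  have hφ₀ : φ₀ ∈ Ωd := interior_subset hφ₀i
  set g₀ : Dd := Projectivization.rep φ₀ with hg₀def
  have hg₀u : g₀ u ≠ 0 := hu0 φ₀ hφ₀
  have hg₀v : g₀ v ≠ 0 := hv0 φ₀ hφ₀
  set A : Vd := g₀ u • v with hAdef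
  set B : Vd := g₀ v • u with hBdef
  have hA : A ≠ 0 := smul_ne_zero hg₀u hv
  have hB : B ≠ 0 := smul_ne_zero hg₀v hu
  have habs : ∀ φ ∈ Ωd, |Projectivization.rep φ A| = |Projectivization.rep φ B| := by
    intro φ hφ
    have h := hall φ hφ φ₀ hφ₀
    rw [abs_mul, abs_mul] at h
    rw [hAdef, hBdef, map_smul, map_smul, smul_eq_mul, smul_eq_mul, abs_mul, abs_mul,
      mul_comm |g₀ u| _, mul_comm |g₀ v| _]
    exact h
  have hkey : A = B ∨ A = -B := by
    by_contra hcon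
    push_neg at hcon
    have h1 : A - B ≠ 0 := sub_ne_zero.mpr hcon.1
    have h2 : A + B ≠ 0 := by
      intro h
      exact hcon.2 (by rw [eq_neg_of_add_eq_zero_left h])
    obtain ⟨g, hgAB1, hgAB2⟩ := exists_functional₂ (A - B) (A + B) h1 h2
    have hf₀ : g₀ ≠ 0 := φ₀.rep_nonzero
    set q : {ξ : Dd // ξ ≠ 0} → ℙ ℝ Dd := Quot.mk (projectivizationSetoid ℝ Dd).r with hqdef
    have hqc : Continuous q := continuous_quot_mk
    have hU : IsOpen (q ⁻¹' interior Ωd) := isOpen_interior.preimage hqc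
    have hmemU : (⟨g₀, hf₀⟩ : {ξ : Dd // ξ ≠ 0}) ∈ q ⁻¹' interior Ωd := by
      show q ⟨g₀, hf₀⟩ ∈ interior Ωd
      have hq0 : q ⟨g₀, hf₀⟩ = Projectivization.mk ℝ g₀ hf₀ := rfl
      have hmk : Projectivization.mk ℝ g₀ hf₀ = φ₀ := Projectivization.mk_rep φ₀
      rw [hq0, hmk]
      exact hφ₀i
    obtain ⟨ε, hε, hball⟩ := Metric.isOpen_iff.mp hU _ hmemU
    have hgpos : (0:ℝ) < ‖g‖ + 1 := by positivity
    have hg₀pos : (0:ℝ) < ‖g₀‖ := norm_pos_iff.mpr hf₀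
    set η : ℝ := min (ε / (‖g‖ + 1)) (‖g₀‖ / (‖g‖ + 1)) with hηdef
    have hηpos : 0 < η := lt_min (by positivity) (by positivity)
    have key : ∀ t : ℝ, 0 < t → t < η →
        (g₀ (A - B) + t * g (A - B)) * (g₀ (A + B) + t * g (A + B)) = 0 := by
      intro t ht htη
      have htg1 : t * ‖g‖ < ε := by
        have hη1 : η ≤ ε / (‖g‖ + 1) := min_le_left _ _
        have : t * (‖g‖ + 1) < (ε / (‖g‖ + 1)) * (‖g‖ + 1) := by
          apply mul_lt_mul_of_pos_right (lt_of_lt_of_le htη hη1) hgpos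
        rw [div_mul_cancel₀ _ hgpos.ne'] at this
        nlinarith
      have htg2 : t * ‖g‖ < ‖g₀‖ := by
        have hη2 : η ≤ ‖g₀‖ / (‖g‖ + 1) := min_le_right _ _
        have : t * (‖g‖ + 1) < (‖g₀‖ / (‖g‖ + 1)) * (‖g‖ + 1) := by
          apply mul_lt_mul_of_pos_right (lt_of_lt_of_le htη hη2) hgpos
        rw [div_mul_cancel₀ _ hgpos.ne'] at this
        nlinarith
      set ξ : Dd := g₀ + t • g with hξdef
      have hξ : ξ ≠ 0 := by
        intro h
        have hg₀eq : g₀ = -(t • g) := eq_neg_of_add_eq_zero_left h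
        have : ‖g₀‖ = t * ‖g‖ := by
          rw [hg₀eq, norm_neg, norm_smul, Real.norm_eq_abs, abs_of_pos ht]
        linarith
      have hdist : (⟨ξ, hξ⟩ : {ξ : Dd // ξ ≠ 0})
          ∈ Metric.ball (⟨g₀, hf₀⟩ : {ξ : Dd // ξ ≠ 0}) ε := by
        show dist (⟨ξ, hξ⟩ : {ξ : Dd // ξ ≠ 0}) ⟨g₀, hf₀⟩ < ε
        rw [Subtype.dist_eq]
        show dist ξ g₀ < ε
        rw [dist_eq_norm]
        have hsub : ξ - g₀ = t • g := by rw [hξdef]; abel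
        rw [hsub, norm_smul, Real.norm_eq_abs, abs_of_pos ht]
        exact htg1
      have hmem2 : Projectivization.mk ℝ ξ hξ ∈ Ωd := interior_subset (hball hdist)
      have habs2 := habs _ hmem2
      obtain ⟨a, ha⟩ := exists_smul_eq_mk_rep ℝ ξ hξ
      rw [← ha, Units.smul_def, ContinuousLinearMap.smul_apply,
        ContinuousLinearMap.smul_apply, smul_eq_mul, smul_eq_mul, abs_mul, abs_mul] at habs2
      have hξAB : abs (ξ A) = abs (ξ B) :=
        mul_left_cancel₀ (abs_ne_zero.mpr a.ne_zero) habs2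
      have hsq : (ξ A)^2 = (ξ B)^2 := by
        rw [← sq_abs (ξ A), ← sq_abs (ξ B), hξAB]
      have e1 : g₀ (A - B) + t * g (A - B) = ξ (A - B) := by
        rw [hξdef]
        simp [ContinuousLinearMap.add_apply, ContinuousLinearMap.smul_apply, smul_eq_mul]
      have e2 : g₀ (A + B) + t * g (A + B) = ξ (A + B) := by
        rw [hξdef]
        simp [ContinuousLinearMap.add_apply, ContinuousLinearMap.smul_apply, smul_eq_mul]
      rw [e1, e2, map_sub, map_add]
      nlinarith
    have hroots : ∀ t : ℝ, 0 < t → t < η →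
        t = -(g₀ (A - B)) / g (A - B) ∨ t = -(g₀ (A + B)) / g (A + B) := by
      intro t ht htη
      rcases mul_eq_zero.mp (key t ht htη) with h | h
      · left
        rw [eq_div_iff hgAB1]
        linarith
      · right
        rw [eq_div_iff hgAB2]
        linarith
    have r2 := hroots (η/2) (by linarith) (by linarith)
    have r3 := hroots (η/3) (by linarith) (by linarith)
    have r4 := hroots (η/4) (by linarith) (by linarith)
    rcases r2 with r2 | r2 <;> rcases r3 with r3 | r3 <;> rcases r4 with r4 | r4 <;> linarith
  rw [Projectivization.mk_eq_mk_iff' ℝ v u hv hu]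
  rcases hkey with h | h
  · refine ⟨(g₀ u)⁻¹ * g₀ v, ?_⟩
    have hinv : (g₀ u)⁻¹ • A = (g₀ u)⁻¹ • B := by rw [h]
    rw [hAdef, hBdef, smul_smul, smul_smul, inv_mul_cancel₀ hg₀u, one_smul] at hinv
    exact hinv.symm
  · refine ⟨(g₀ u)⁻¹ * (-(g₀ v)), ?_⟩
    have hinv : (g₀ u)⁻¹ • A = (g₀ u)⁻¹ • (-B) := by rw [h]
    rw [hAdef, hBdef, smul_smul, inv_mul_cancel₀ hg₀u, one_smul, ← neg_smul, smul_smul] at hinv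
    exact hinv.symm

lemma exists_approx (Ω : Set (ℙ ℝ Vd)) (x : ℙ ℝ Vd) (hx : x ∈ closure Ω)
    (ε : ℝ) (hε : 0 < ε) :
    ∃ w : {w : Vd // w ≠ 0}, ‖w.1 - x.rep‖ < ε ∧ Projectivization.mk ℝ w.1 w.2 ∈ Ω := by
  set v : Vd := x.rep with hvdef
  set N : Set (ℙ ℝ Vd) :=
    {z | ∃ w : {w : Vd // w ≠ 0}, ‖w.1 - v‖ < ε ∧ z = Projectivization.mk ℝ w.1 w.2} with hNdef
  have hNopen : IsOpen N := by
    refine (isQuotientMap_quot_mk (r := (projectivizationSetoid ℝ Vd).r)).isOpen_preimage.mp ?_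
    have hpre : (Quot.mk (projectivizationSetoid ℝ Vd).r) ⁻¹' N
        = ⋃ (a : ℝˣ), {ξ : {w : Vd // w ≠ 0} | ‖(a:ℝ)⁻¹ • ξ.1 - v‖ < ε} := by
      ext ξ
      simp only [Set.mem_preimage, Set.mem_iUnion, Set.mem_setOf_eq, hNdef]
      constructor
      · rintro ⟨w, hwε, hweq⟩
        have heq : Projectivization.mk ℝ ξ.1 ξ.2 = Projectivization.mk ℝ w.1 w.2 := hweq
        rw [Projectivization.mk_eq_mk_iff] at heq
        obtain ⟨a, ha⟩ := heq
        refine ⟨a, ?_⟩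
        have : (a:ℝ)⁻¹ • ξ.1 = w.1 := by
          rw [← ha, Units.smul_def, smul_smul, inv_mul_cancel₀ a.ne_zero, one_smul]
        rw [this]
        exact hwε
      · rintro ⟨a, haε⟩
        refine ⟨⟨(a:ℝ)⁻¹ • ξ.1, smul_ne_zero (inv_ne_zero a.ne_zero) ξ.2⟩, haε, ?_⟩
        show Projectivization.mk ℝ ξ.1 ξ.2 = _
        rw [Projectivization.mk_eq_mk_iff]
        exact ⟨a, by rw [Units.smul_def, smul_smul, mul_inv_cancel₀ a.ne_zero, one_smul]⟩
    rw [hpre]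
    apply isOpen_iUnion
    intro a
    have hc : Continuous fun ξ : {w : Vd // w ≠ 0} => ‖(a:ℝ)⁻¹ • ξ.1 - v‖ :=
      (((continuous_subtype_val (p := fun w : Vd => w ≠ 0)).const_smul ((a:ℝ)⁻¹)).sub
        (continuous_const (y := v))).norm
    exact isOpen_lt hc continuous_const
  have hxN : x ∈ N := by
    refine ⟨⟨v, x.rep_nonzero⟩, by simpa using hε, ?_⟩
    exact (Projectivization.mk_rep x).symm
  obtain ⟨z, hzN, hzΩ⟩ := mem_closure_iff.mp hx N hNopen hxN
  obtain ⟨w, hwε, rfl⟩ := hzN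
  exact ⟨w, hwε, hzΩ⟩

end Stmt11Aux

theorem stmt_11 (d : ℕ)
    (Ω : Set (ℙ ℝ (Fin d → ℝ))) (hopen : IsOpen Ω) (hconn : IsConnected Ω)
    (Ωd : Set (ℙ ℝ (StrongDual ℝ (Fin d → ℝ))))
    (hΩd : Ωd = {φ : ℙ ℝ (StrongDual ℝ (Fin d → ℝ)) |
      ∀ x ∈ Ω, Projectivization.rep φ (Projectivization.rep x) ≠ 0})
    (hΩdcpt : IsCompact Ωd) (hΩdint : (interior Ωd).Nonempty)
    (hcomplete : ∀ u : ℕ → ℙ ℝ (Fin d → ℝ), (∀ n, u n ∈ Ω) →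
      (∀ ε : ℝ, 0 < ε → ∃ N : ℕ, ∀ m ≥ N, ∀ n ≥ N, crossDist Ωd (u m) (u n) < ε) →
      ∃ x ∈ Ω, Filter.Tendsto (fun n => crossDist Ωd (u n) x) Filter.atTop (nhds 0)) :
    ∀ x ∈ frontier Ω, ∃ ξ ∈ Ωd,
      Projectivization.rep ξ (Projectivization.rep x) = 0 := by
  classical
  open Stmt11Aux in
  intro x hx
  by_contra hcon
  push_neg at hcon
  have hne : Ωd.Nonempty := ⟨hΩdint.choose, interior_subset hΩdint.choose_spec⟩
  set v := x.rep with hvdef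
  have hv : v ≠ 0 := x.rep_nonzero
  have hfr : x ∈ closure Ω \ Ω := hopen.frontier_eq ▸ hx
  have hxcl : x ∈ closure Ω := hfr.1
  have hxnot : x ∉ Ω := hfr.2
  obtain ⟨δ, hδ, hδle⟩ := Stmt11Aux.exists_delta Ωd hΩdcpt hne v hcon
  have hδ2 : (0:ℝ) < δ/2 := by positivity
  -- an approximating sequence
  have hseq : ∀ n : ℕ, ∃ w : {w : Fin d → ℝ // w ≠ 0},
      ‖w.1 - v‖ < δ/(2*(n+1)) ∧ Projectivization.mk ℝ w.1 w.2 ∈ Ω := fun n =>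
    Stmt11Aux.exists_approx Ω x hxcl _ (by positivity)
  choose w hwlt hwΩ using hseq
  set un : ℕ → ℙ ℝ (Fin d → ℝ) := fun n => Projectivization.mk ℝ (w n).1 (w n).2 with hundef
  have hwv : ∀ n : ℕ, ‖(w n).1 - v‖ ≤ δ/2 := by
    intro n
    have h1 : (2:ℝ) ≤ 2*((n:ℝ)+1) := by
      have : (0:ℝ) ≤ (n:ℝ) := Nat.cast_nonneg n
      nlinarith
    have h2 : δ/(2*((n:ℝ)+1)) ≤ δ/2 := Stmt11Aux.div_le_div_left' hδ.le (by norm_num) h1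
    have := hwlt n
    push_cast at this ⊢
    linarith
  have hG1 : ∀ φ ∈ Ωd, δ/2 * ‖Projectivization.rep φ‖ ≤ |Projectivization.rep φ v| := by
    intro φ hφ
    nlinarith [hδle φ hφ, norm_nonneg (Projectivization.rep φ)]
  have hG2 : ∀ n, ∀ φ ∈ Ωd, δ/2 * ‖Projectivization.rep φ‖
      ≤ |Projectivization.rep φ ((w n).1)| := by
    intro n φ hφ
    have h1 := hδle φ hφ
    have h2 : |Projectivization.rep φ v| - |Projectivization.rep φ ((w n).1)|
        ≤ ‖Projectivization.rep φ‖ * ‖v - (w n).1‖ := by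
      calc |Projectivization.rep φ v| - |Projectivization.rep φ ((w n).1)|
          ≤ |Projectivization.rep φ v - Projectivization.rep φ ((w n).1)| :=
            abs_sub_abs_le_abs_sub _ _
        _ = |Projectivization.rep φ (v - (w n).1)| := by rw [map_sub]
        _ ≤ ‖Projectivization.rep φ‖ * ‖v - (w n).1‖ := by
            simpa [Real.norm_eq_abs] using (Projectivization.rep φ).le_opNorm (v - (w n).1)
    have h3 : ‖v - (w n).1‖ ≤ δ/2 := by rw [norm_sub_rev]; exact hwv n
    nlinarith [norm_nonneg (Projectivization.rep φ)]
  -- the sequence is Cauchy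
  have hcd : ∀ m n : ℕ, crossDist Ωd (un m) (un n) ≤ ‖(w m).1 - (w n).1‖ / (δ/2) := by
    intro m n
    rw [hundef]
    dsimp only
    rw [Stmt11Aux.crossDist_mk]
    exact Real.sSup_le (Stmt11Aux.ES_bound Ωd _ _ _ hδ2 (hG2 m) (hG2 n)) (by positivity)
  have hcauchy : ∀ ε : ℝ, 0 < ε → ∃ N : ℕ, ∀ m ≥ N, ∀ n ≥ N,
      crossDist Ωd (un m) (un n) < ε := by
    intro ε hε
    obtain ⟨N, hN⟩ := exists_nat_gt (2/ε)
    refine ⟨N, fun m hm n hn => ?_⟩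
    have hmc : ((N:ℝ)+1) ≤ ((m:ℝ)+1) := by
      have h : (N:ℝ) ≤ (m:ℝ) := Nat.cast_le.mpr hm
      linarith
    have hnc : ((N:ℝ)+1) ≤ ((n:ℝ)+1) := by
      have h : (N:ℝ) ≤ (n:ℝ) := Nat.cast_le.mpr hn
      linarith
    have hNpos : (0:ℝ) < (N:ℝ)+1 := by positivity
    have hA : ‖(w m).1 - (w n).1‖ < δ/(2*((m:ℝ)+1)) + δ/(2*((n:ℝ)+1)) := by
      have hm' := hwlt m
      have hn' := hwlt n
      push_cast at hm' hn'
      calc ‖(w m).1 - (w n).1‖ = ‖((w m).1 - v) - ((w n).1 - v)‖ := by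
            rw [sub_sub_sub_cancel_right]
        _ ≤ ‖(w m).1 - v‖ + ‖(w n).1 - v‖ := norm_sub_le _ _
        _ < δ/(2*((m:ℝ)+1)) + δ/(2*((n:ℝ)+1)) := add_lt_add hm' hn'
    have hBm : δ/(2*((m:ℝ)+1)) ≤ δ/(2*((N:ℝ)+1)) :=
      Stmt11Aux.div_le_div_left' hδ.le (by positivity) (by linarith)
    have hBn : δ/(2*((n:ℝ)+1)) ≤ δ/(2*((N:ℝ)+1)) :=
      Stmt11Aux.div_le_div_left' hδ.le (by positivity) (by linarith)
    have hlt : ‖(w m).1 - (w n).1‖ < δ/(2*((N:ℝ)+1)) + δ/(2*((N:ℝ)+1)) := by linarith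
    have hC : crossDist Ωd (un m) (un n) < (δ/(2*((N:ℝ)+1)) + δ/(2*((N:ℝ)+1))) / (δ/2) :=
      lt_of_le_of_lt (hcd m n) (by gcongr)
    have hD : (δ/(2*((N:ℝ)+1)) + δ/(2*((N:ℝ)+1))) / (δ/2) = 2/((N:ℝ)+1) := by
      field_simp
      ring
    have hE : 2/((N:ℝ)+1) < ε := by
      rw [div_lt_iff₀ hNpos]
      rw [div_lt_iff₀ hε] at hN
      nlinarith
    rw [hD] at hC
    linarith
  -- apply completeness
  obtain ⟨y, hyΩ, hty⟩ := hcomplete un (fun n => hwΩ n) hcauchy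
  set u := y.rep with hudef
  have hu : u ≠ 0 := y.rep_nonzero
  have hu0 : ∀ φ ∈ Ωd, Projectivization.rep φ u ≠ 0 := by
    intro φ hφ
    rw [hΩd] at hφ
    exact hφ y hyΩ
  obtain ⟨δy, hδy, hδyle⟩ := Stmt11Aux.exists_delta Ωd hΩdcpt hne u hu0
  -- crossDist (un n) x as a sup, and its convergence to 0
  have hxmk : x = Projectivization.mk ℝ v hv := (Projectivization.mk_rep x).symm
  have hymk : y = Projectivization.mk ℝ u hu := (Projectivization.mk_rep y).symm
  have hcdx : ∀ n, crossDist Ωd (un n) x = sSup (Stmt11Aux.ES Ωd ((w n).1) v) := by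
    intro n
    conv_lhs => rw [hundef, hxmk]
    dsimp only
    rw [Stmt11Aux.crossDist_mk]
  have hcdy : ∀ n, crossDist Ωd (un n) y = sSup (Stmt11Aux.ES Ωd ((w n).1) u) := by
    intro n
    conv_lhs => rw [hundef, hymk]
    dsimp only
    rw [Stmt11Aux.crossDist_mk]
  have hBx : ∀ n, BddAbove (Stmt11Aux.ES Ωd ((w n).1) v) := fun n =>
    Stmt11Aux.bddAbove_ES Ωd _ _ _ hδ2 (hG2 n) hG1
  have htx : Filter.Tendsto (fun n => crossDist Ωd (un n) x) Filter.atTop (nhds 0) := by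
    apply squeeze_zero (f := fun n => crossDist Ωd (un n) x) (g := fun n => 1/((n:ℝ)+1))
    · intro n
      rw [hcdx n]
      exact le_csSup (hBx n) (Stmt11Aux.zero_mem_ES Ωd hne _ _)
    · intro n
      rw [hcdx n]
      have hb := Real.sSup_le (Stmt11Aux.ES_bound Ωd _ _ _ hδ2 (hG2 n) hG1) (by positivity)
      have hwn := hwlt n
      push_cast at hwn
      have h1 : ‖(w n).1 - v‖ / (δ/2) ≤ (δ/(2*((n:ℝ)+1))) / (δ/2) := by gcongr
      have h2 : (δ/(2*((n:ℝ)+1))) / (δ/2) = 1/((n:ℝ)+1) := by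
        have hn1 : ((n:ℝ)+1) ≠ 0 := by positivity
        field_simp
      linarith
    · exact tendsto_one_div_add_atTop_nhds_zero_nat
  -- uniform lower bounds with δ' = min (δ/2) δy
  set δ' : ℝ := min (δ/2) δy with hδ'def
  have hδ'pos : 0 < δ' := lt_min hδ2 hδy
  have hG1' : ∀ φ ∈ Ωd, δ' * ‖Projectivization.rep φ‖ ≤ |Projectivization.rep φ v| := by
    intro φ hφ
    refine le_trans ?_ (hG1 φ hφ)
    have := min_le_left (δ/2) δy
    nlinarith [norm_nonneg (Projectivization.rep φ)]
  have hGu : ∀ φ ∈ Ωd, δ' * ‖Projectivization.rep φ‖ ≤ |Projectivization.rep φ u| := by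
    intro φ hφ
    refine le_trans ?_ (hδyle φ hφ)
    have := min_le_right (δ/2) δy
    nlinarith [norm_nonneg (Projectivization.rep φ)]
  have hG2' : ∀ n, ∀ φ ∈ Ωd, δ' * ‖Projectivization.rep φ‖
      ≤ |Projectivization.rep φ ((w n).1)| := by
    intro n φ hφ
    refine le_trans ?_ (hG2 n φ hφ)
    have := min_le_left (δ/2) δy
    nlinarith [norm_nonneg (Projectivization.rep φ)]
  have hB2 : ∀ n, BddAbove (Stmt11Aux.ES Ωd ((w n).1) u) := fun n =>
    Stmt11Aux.bddAbove_ES Ωd _ _ _ hδ'pos (hG2' n) hGu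
  have hBvu : BddAbove (Stmt11Aux.ES Ωd v u) :=
    Stmt11Aux.bddAbove_ES Ωd _ _ _ hδ'pos hG1' hGu
  have hwnz : ∀ n, ∀ φ ∈ Ωd, Projectivization.rep φ ((w n).1) ≠ 0 := fun n φ hφ =>
    Stmt11Aux.rep_ne_of_mem Ω Ωd hΩd φ hφ _ _ (hwΩ n)
  -- triangle inequality and limit
  have htri : ∀ n, sSup (Stmt11Aux.ES Ωd v u)
      ≤ crossDist Ωd (un n) x + crossDist Ωd (un n) y := by
    intro n
    have h := Stmt11Aux.ES_triangle Ωd hne v ((w n).1) u (hwnz n) (hBx n |> fun hb => ?_) (hB2 n)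
    · have e1 : sSup (Stmt11Aux.ES Ωd v ((w n).1)) = crossDist Ωd (un n) x := by
        rw [hcdx n, Stmt11Aux.ES_symm]
      have e2 : sSup (Stmt11Aux.ES Ωd ((w n).1) u) = crossDist Ωd (un n) y := (hcdy n).symm
      linarith [h, e1.le, e1.ge]
    · rw [Stmt11Aux.ES_symm]
      exact hBx n
  have hsum : Filter.Tendsto
      (fun n => crossDist Ωd (un n) x + crossDist Ωd (un n) y) Filter.atTop (nhds 0) := by
    simpa using htx.add hty
  have hsup0 : sSup (Stmt11Aux.ES Ωd v u) ≤ 0 := ge_of_tendsto' hsum htri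
  -- conclude equality of the two points
  have hall : ∀ f ∈ Ωd, ∀ g ∈ Ωd,
      |Projectivization.rep f v * Projectivization.rep g u|
        = |Projectivization.rep f u * Projectivization.rep g v| := by
    intro f hf g hg
    set R : ℝ := (Projectivization.rep f v * Projectivization.rep g u)
      / (Projectivization.rep f u * Projectivization.rep g v) with hRdef
    have hmem : (1/2 : ℝ) * |Real.log (abs R)| ∈ Stmt11Aux.ES Ωd v u := ⟨f, hf, g, hg, rfl⟩
    have hle := le_csSup hBvu hmem
    have hge : (0:ℝ) ≤ (1/2 : ℝ) * |Real.log (abs R)| := by positivity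
    have heq0 : Real.log (abs R) = 0 := abs_eq_zero.mp (by linarith)
    have hnz : R ≠ 0 := by
      rw [hRdef]
      exact div_ne_zero (mul_ne_zero (hcon f hf) (hu0 g hg))
        (mul_ne_zero (hu0 f hf) (hcon g hg))
    have habs1 : abs R = 1 := by
      rcases Real.log_eq_zero.mp heq0 with h | h | h
      · exact absurd h (abs_ne_zero.mpr hnz)
      · exact h
      · linarith [abs_nonneg R]
    rw [hRdef, abs_div] at habs1
    have hden : |Projectivization.rep f u * Projectivization.rep g v| ≠ 0 :=
      abs_ne_zero.mpr (mul_ne_zero (hu0 f hf) (hcon g hg))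
    exact (div_eq_one_iff_eq hden).mp habs1
  have hxy : Projectivization.mk ℝ v hv = Projectivization.mk ℝ u hu :=
    Stmt11Aux.eq_of_abs_eq Ωd hΩdint v u hv hu (fun φ hφ => hcon φ hφ) hu0 hall
  have hxeqy : x = y := by
    rw [hxmk, hymk, hxy]
  exact hxnot (hxeqy ▸ hyΩ)
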